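/- For every integer c ≥ 2, there exists a natural number ℓ with ℓ < √c · e^c such that every c-intersecting hypergraph on a finite vertex set admits a c-strong coloring using ℓ colors. -/

import Mathlib

universe u

namespace SC

open Finset

/-! ### Elementary compression machinery on families of finite sets of naturals -/

/-- Replace `j` by `i` in the set `A`. -/
def cmp (i j : ℕ) (A : Finset ℕ) : Finset ℕ := insert i (A.erase j)

lemma mem_cmp_self {i j : ℕ} {A : Finset ℕ} : i ∈ cmp i j A := mem_insert_self _ _

lemma not_mem_erase_of_not_mem {i j : ℕ} {A : Finset ℕ} (hi : i ∉ A) : i ∉ A.erase j :=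
  fun h => hi (mem_of_mem_erase h)

lemma cmp_card {i j : ℕ} {A : Finset ℕ} (hj : j ∈ A) (hi : i ∉ A) :
    (cmp i j A).card = A.card := by
  rw [cmp, card_insert_of_notMem (not_mem_erase_of_not_mem hi), card_erase_of_mem hj]
  have : 1 ≤ A.card := card_pos.2 ⟨j, hj⟩
  omega

lemma cmp_subset_range {i j n : ℕ} {A : Finset ℕ} (hij : i < j) (hA : A ⊆ range n)
    (hj : j ∈ A) : cmp i j A ⊆ range n := by
  intro x hx
  rcases mem_insert.1 hx with rfl | hx
  · have := mem_range.1 (hA hj); exact mem_range.2 (by omega)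
  · exact hA (mem_of_mem_erase hx)

lemma cmp_recover {i j : ℕ} {A : Finset ℕ} (hj : j ∈ A) (hi : i ∉ A) :
    insert j ((cmp i j A).erase i) = A := by
  rw [cmp, erase_insert (not_mem_erase_of_not_mem hi), insert_erase hj]

/-- One step of compression applied to a member of the family `F`. -/
def phi (i j : ℕ) (F : Finset (Finset ℕ)) (A : Finset ℕ) : Finset ℕ :=
  if j ∈ A ∧ i ∉ A ∧ cmp i j A ∉ F then cmp i j A else A

/-- The `(i,j)`-compression of the family `F`. -/
def shf (i j : ℕ) (F : Finset (Finset ℕ)) : Finset (Finset ℕ) := F.image (phi i j F)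

variable {i j : ℕ} {F : Finset (Finset ℕ)}

lemma phi_card (A : Finset ℕ) : (phi i j F A).card = A.card := by
  unfold phi; split_ifs with h
  · exact cmp_card h.1 h.2.1
  · rfl

lemma phi_injOn : ∀ A ∈ F, ∀ B ∈ F, phi i j F A = phi i j F B → A = B := by
  intro A hA B hB hAB
  unfold phi at hAB
  split_ifs at hAB with h1 h2 h2
  · have := congrArg (fun s => insert j (s.erase i)) hAB
    simpa only [cmp_recover h1.1 h1.2.1, cmp_recover h2.1 h2.2.1] using this
  · exact absurd (hAB.symm ▸ hB : cmp i j A ∈ F) h1.2.2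
  · exact absurd (hAB ▸ hA : cmp i j B ∈ F) h2.2.2
  · exact hAB

lemma sum_shf (w : ℕ → ℝ) : ∑ A ∈ shf i j F, w A.card = ∑ A ∈ F, w A.card := by
  rw [shf, sum_image phi_injOn]
  exact sum_congr rfl fun A _ => by rw [phi_card]

/-- weight used for termination -/
def wt (A : Finset ℕ) : ℕ := ∑ x ∈ A, x

def Pot (F : Finset (Finset ℕ)) : ℕ := ∑ A ∈ F, wt A

lemma wt_cmp_lt {A : Finset ℕ} (hij : i < j) (hj : j ∈ A) (hi : i ∉ A) :
    wt (cmp i j A) < wt A := by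
  have h1 : wt (cmp i j A) = i + wt (A.erase j) := by
    rw [cmp, wt, sum_insert (not_mem_erase_of_not_mem hi)]; rfl
  have h2 : wt (A.erase j) + j = wt A := sum_erase_add A _ hj
  omega

lemma Pot_shf_lt (hij : i < j) {A₀ : Finset ℕ} (hA₀ : A₀ ∈ F) (hj : j ∈ A₀) (hi : i ∉ A₀)
    (hcm : cmp i j A₀ ∉ F) : Pot (shf i j F) < Pot F := by
  rw [Pot, shf, sum_image phi_injOn]
  apply sum_lt_sum
  · intro A hA
    unfold phi; split_ifs with h
    · exact le_of_lt (wt_cmp_lt hij h.1 h.2.1)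
    · exact le_rfl
  · refine ⟨A₀, hA₀, ?_⟩
    unfold phi; rw [if_pos ⟨hj, hi, hcm⟩]
    exact wt_cmp_lt hij hj hi

lemma shf_subset_range {n : ℕ} (hij : i < j) (h : ∀ A ∈ F, A ⊆ range n) :
    ∀ A ∈ shf i j F, A ⊆ range n := by
  intro A hA
  obtain ⟨B, hB, rfl⟩ := mem_image.1 hA
  unfold phi; split_ifs with hB'
  · exact cmp_subset_range hij (h B hB) hB'.1
  · exact h B hB

/-- `t`-intersecting family (including pairs `A = B`). -/
def Inters (t : ℕ) (F : Finset (Finset ℕ)) : Prop := ∀ A ∈ F, ∀ B ∈ F, t ≤ (A ∩ B).card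

lemma half {t : ℕ} (hF : Inters t F) {A B : Finset ℕ} (hA : A ∈ F) (hB : B ∈ F)
    (hA' : j ∈ A ∧ i ∉ A ∧ cmp i j A ∉ F) (hB' : ¬(j ∈ B ∧ i ∉ B ∧ cmp i j B ∉ F)) :
    t ≤ ((cmp i j A) ∩ B).card := by
  by_cases hjB : j ∈ B
  · by_cases hiB : i ∈ B
    · have hsub : insert i ((A ∩ B).erase j) ⊆ cmp i j A ∩ B := by
        intro x hx
        rcases mem_insert.1 hx with rfl | hx
        · exact mem_inter.2 ⟨mem_cmp_self, hiB⟩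
        · obtain ⟨hxj, hxAB⟩ := mem_erase.1 hx
          obtain ⟨hxA, hxB⟩ := mem_inter.1 hxAB
          exact mem_inter.2 ⟨mem_insert_of_mem (mem_erase.2 ⟨hxj, hxA⟩), hxB⟩
      have hjAB : j ∈ A ∩ B := mem_inter.2 ⟨hA'.1, hjB⟩
      have hiAB : i ∉ (A ∩ B).erase j :=
        fun h => hA'.2.1 (mem_inter.1 (mem_of_mem_erase h)).1
      have hcard : (insert i ((A ∩ B).erase j)).card = (A ∩ B).card := by
        rw [card_insert_of_notMem hiAB, card_erase_of_mem hjAB]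
        have : 1 ≤ (A ∩ B).card := card_pos.2 ⟨j, hjAB⟩
        omega
      calc t ≤ (A ∩ B).card := hF A hA B hB
        _ = _ := hcard.symm
        _ ≤ _ := card_le_card hsub
    · have hcB : cmp i j B ∈ F := by
        by_contra hcm; exact hB' ⟨hjB, hiB, hcm⟩
      have hkey : t ≤ (A ∩ cmp i j B).card := hF A hA _ hcB
      have heq : A ∩ cmp i j B = (A ∩ B).erase j := by
        ext x
        simp only [mem_inter, cmp, mem_insert, mem_erase]
        constructor
        · rintro ⟨hxA, rfl | ⟨hxj, hxB⟩⟩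
          · exact absurd hxA hA'.2.1
          · exact ⟨hxj, hxA, hxB⟩
        · rintro ⟨hxj, hxA, hxB⟩; exact ⟨hxA, Or.inr ⟨hxj, hxB⟩⟩
      have hsub : (A ∩ B).erase j ⊆ cmp i j A ∩ B := by
        intro x hx
        obtain ⟨hxj, hxAB⟩ := mem_erase.1 hx
        obtain ⟨hxA, hxB⟩ := mem_inter.1 hxAB
        exact mem_inter.2 ⟨mem_insert_of_mem (mem_erase.2 ⟨hxj, hxA⟩), hxB⟩
      calc t ≤ (A ∩ cmp i j B).card := hkey
        _ = ((A ∩ B).erase j).card := by rw [heq]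
        _ ≤ _ := card_le_card hsub
  · have hsub : A ∩ B ⊆ cmp i j A ∩ B := by
      intro x hx
      obtain ⟨hxA, hxB⟩ := mem_inter.1 hx
      have hxj : x ≠ j := fun h => hjB (h ▸ hxB)
      exact mem_inter.2 ⟨mem_insert_of_mem (mem_erase.2 ⟨hxj, hxA⟩), hxB⟩
    exact le_trans (hF A hA B hB) (card_le_card hsub)

lemma Inters_shf {t : ℕ} (hF : Inters t F) : Inters t (shf i j F) := by
  intro A' hA' B' hB'
  obtain ⟨A, hA, rfl⟩ := mem_image.1 hA'
  obtain ⟨B, hB, rfl⟩ := mem_image.1 hB'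
  unfold phi
  split_ifs with h1 h2 h2
  · have hsub : insert i ((A ∩ B).erase j) ⊆ cmp i j A ∩ cmp i j B := by
      intro x hx
      rcases mem_insert.1 hx with rfl | hx
      · exact mem_inter.2 ⟨mem_cmp_self, mem_cmp_self⟩
      · obtain ⟨hxj, hxAB⟩ := mem_erase.1 hx
        obtain ⟨hxA, hxB⟩ := mem_inter.1 hxAB
        exact mem_inter.2 ⟨mem_insert_of_mem (mem_erase.2 ⟨hxj, hxA⟩),
          mem_insert_of_mem (mem_erase.2 ⟨hxj, hxB⟩)⟩
    have hjAB : j ∈ A ∩ B := mem_inter.2 ⟨h1.1, h2.1⟩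
    have hiAB : i ∉ (A ∩ B).erase j :=
      fun h => h1.2.1 (mem_inter.1 (mem_of_mem_erase h)).1
    have hcard : (insert i ((A ∩ B).erase j)).card = (A ∩ B).card := by
      rw [card_insert_of_notMem hiAB, card_erase_of_mem hjAB]
      have : 1 ≤ (A ∩ B).card := card_pos.2 ⟨j, hjAB⟩
      omega
    calc t ≤ (A ∩ B).card := hF A hA B hB
      _ = _ := hcard.symm
      _ ≤ _ := card_le_card hsub
  · exact half hF hA hB h1 h2
  · rw [inter_comm]; exact half hF hB hA h2 h1
  · exact hF A hA B hB

/-- A left-shifted family. -/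
def IsShifted (F : Finset (Finset ℕ)) : Prop :=
  ∀ A ∈ F, ∀ i j : ℕ, i < j → j ∈ A → i ∉ A → cmp i j A ∈ F

lemma exists_shifted (t n : ℕ) :
    ∀ N (F : Finset (Finset ℕ)), Pot F ≤ N → (∀ A ∈ F, A ⊆ range n) → Inters t F →
    ∃ G, IsShifted G ∧ Inters t G ∧ (∀ A ∈ G, A ⊆ range n) ∧
      ∀ w : ℕ → ℝ, ∑ A ∈ G, w A.card = ∑ A ∈ F, w A.card := by
  intro N
  induction N using Nat.strong_induction_on with
  | _ N IH =>
    intro F hN hsub hint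
    by_cases hSh : IsShifted F
    · exact ⟨F, hSh, hint, hsub, fun w => rfl⟩
    · rw [IsShifted] at hSh
      push_neg at hSh
      obtain ⟨A₀, hA₀, i, j, hij, hjA, hiA, hcm⟩ := hSh
      have hPot : Pot (shf i j F) < N :=
        lt_of_lt_of_le (Pot_shf_lt hij hA₀ hjA hiA hcm) hN
      obtain ⟨G, h1, h2, h3, h4⟩ := IH (Pot (shf i j F)) hPot (shf i j F) le_rfl
        (shf_subset_range hij hsub) (Inters_shf hint)
      exact ⟨G, h1, h2, h3, fun w => (h4 w).trans (sum_shf w)⟩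


/-! ### rank of an element in a finite set of naturals -/

def rk (A : Finset ℕ) (x : ℕ) : ℕ := (A.filter (· < x)).card

lemma rk_lt_card {A : Finset ℕ} {x : ℕ} (hx : x ∈ A) : rk A x < A.card := by
  apply card_lt_card
  rw [Finset.ssubset_iff_of_subset (filter_subset _ _)]
  exact ⟨x, hx, by simp⟩

lemma rk_lt_rk {A : Finset ℕ} {x y : ℕ} (hx : x ∈ A) (hxy : x < y) : rk A x < rk A y := by
  apply card_lt_card
  constructor
  · intro z hz
    obtain ⟨hzA, hzx⟩ := mem_filter.1 hz
    exact mem_filter.2 ⟨hzA, lt_trans hzx hxy⟩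
  · intro h
    have := h (mem_filter.2 ⟨hx, hxy⟩)
    exact absurd (mem_filter.1 this).2 (lt_irrefl x)

lemma rk_injOn {A : Finset ℕ} {x y : ℕ} (hx : x ∈ A) (hy : y ∈ A)
    (h : rk A x = rk A y) : x = y := by
  rcases lt_trichotomy x y with hlt | heq | hlt
  · exact absurd h (Nat.ne_of_lt (rk_lt_rk hx hlt))
  · exact heq
  · exact absurd h.symm (Nat.ne_of_lt (rk_lt_rk hy hlt))

lemma image_rk (A : Finset ℕ) : A.image (rk A) = range A.card := by
  apply eq_of_subset_of_card_le
  · intro r hr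
    obtain ⟨x, hx, rfl⟩ := mem_image.1 hr
    exact mem_range.2 (rk_lt_card hx)
  · rw [card_range, card_image_of_injOn (fun x hx y hy h => rk_injOn hx hy h)]

lemma exists_rk_eq {A : Finset ℕ} {r : ℕ} (hr : r < A.card) : ∃ x ∈ A, rk A x = r := by
  have : r ∈ A.image (rk A) := by rw [image_rk]; exact mem_range.2 hr
  simpa using this

lemma rk_add_one_le {A : Finset ℕ} {x m : ℕ} (hx : x ∈ A) (hxm : x < m) :
    rk A x + 1 ≤ (A ∩ range m).card := by
  have hsub : insert x (A.filter (· < x)) ⊆ A ∩ range m := by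
    intro z hz
    rcases mem_insert.1 hz with rfl | hz
    · exact mem_inter.2 ⟨hx, mem_range.2 hxm⟩
    · obtain ⟨hzA, hzx⟩ := mem_filter.1 hz
      exact mem_inter.2 ⟨hzA, mem_range.2 (lt_trans hzx hxm)⟩
  have hnx : x ∉ A.filter (· < x) := fun h => absurd (mem_filter.1 h).2 (lt_irrefl x)
  have hc : (insert x (A.filter (· < x))).card = rk A x + 1 := by
    rw [card_insert_of_notMem hnx]
    rfl
  rw [← hc]
  exact card_le_card hsub

lemma card_filter_rk_lt (A : Finset ℕ) (s : ℕ) (hs : s ≤ A.card) :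
    (A.filter (fun x => rk A x < s)).card = s := by
  have hinj : Set.InjOn (rk A) ↑(A.filter (fun x => rk A x < s)) := by
    intro x hx y hy h
    simp only [coe_filter, Set.mem_setOf_eq] at hx hy
    exact rk_injOn hx.1 hy.1 h
  have h1 : ((A.filter (fun x => rk A x < s)).image (rk A)).card
      = (A.filter (fun x => rk A x < s)).card := card_image_of_injOn hinj
  have h2 : (A.filter (fun x => rk A x < s)).image (rk A)
      = (A.image (rk A)).filter (· < s) := by
    rw [Finset.filter_image]
  have h3 : (A.image (rk A)).filter (· < s) = range s := by
    rw [image_rk]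
    ext z
    simp only [mem_filter, mem_range]
    omega
  rw [← h1, h2, h3, card_range]


/-! ### Frankl's walk lemma for shifted intersecting families -/

lemma walk_lemma {t : ℕ} {F : Finset (Finset ℕ)} (hSh : IsShifted F) (hInt : Inters t F)
    (ht : 1 ≤ t) {A : Finset ℕ} (hA : A ∈ F) :
    ∃ i, t + i ≤ (A ∩ range (t + 2*i)).card := by
  by_contra hcon
  push_neg at hcon
  have hk : t ≤ A.card := by simpa using hInt A hA A hA
  have main : ∀ i, i ≤ A.card - (t-1) →
      ∃ B Y, B ∈ F ∧ Y.card = i ∧ (∀ y ∈ Y, y ∉ A) ∧ (∀ y ∈ Y, y < t + 2*i) ∧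
        B = Y ∪ A.filter (fun x => rk A x < t - 1 ∨ t - 1 + i ≤ rk A x) := by
    intro i
    induction i with
    | zero =>
      intro _
      refine ⟨A, ∅, hA, rfl, by simp, by simp, ?_⟩
      rw [empty_union]
      symm
      apply filter_true_of_mem
      intro x hx
      omega
    | succ i ih =>
      intro hi
      obtain ⟨B, Y, hBF, hYc, hYA, hYlt, hBeq⟩ := ih (by omega)
      obtain ⟨x, hxA, hxrk⟩ : ∃ x ∈ A, rk A x = t - 1 + i :=
        exists_rk_eq (by omega)
      have hxge : t + 2*i ≤ x := by
        by_contra hlt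
        push_neg at hlt
        have h1 := rk_add_one_le hxA hlt
        have h2 := hcon i
        omega
      have hcand : ((range (t + 2*i)) \ (A ∪ Y)).Nonempty := by
        rw [← card_pos]
        have hsub2 : range (t + 2*i) ⊆
            ((range (t+2*i)) \ (A ∪ Y)) ∪ ((A ∩ range (t+2*i)) ∪ Y) := by
          intro z hz
          by_cases hzA : z ∈ A
          · exact mem_union_right _ (mem_union_left _ (mem_inter.2 ⟨hzA, hz⟩))
          · by_cases hzY : z ∈ Y
            · exact mem_union_right _ (mem_union_right _ hzY)
            · refine mem_union_left _ (mem_sdiff.2 ⟨hz, fun h => ?_⟩)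
              rcases mem_union.1 h with h | h
              exacts [hzA h, hzY h]
        have hc1 := card_le_card hsub2
        have hc2 := card_union_le ((range (t+2*i)) \ (A ∪ Y)) ((A ∩ range (t+2*i)) ∪ Y)
        have hc3 := card_union_le (A ∩ range (t+2*i)) Y
        have hc4 := hcon i
        rw [card_range] at hc1
        omega
      obtain ⟨y, hy⟩ := hcand
      obtain ⟨hyR, hyAY⟩ := mem_sdiff.1 hy
      have hyA : y ∉ A := fun h => hyAY (mem_union_left _ h)
      have hyY : y ∉ Y := fun h => hyAY (mem_union_right _ h)
      have hyR' := mem_range.1 hyR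
      have hxB : x ∈ B := by
        rw [hBeq]
        exact mem_union_right _ (mem_filter.2 ⟨hxA, Or.inr (by omega)⟩)
      have hyB : y ∉ B := by
        rw [hBeq]
        intro h
        rcases mem_union.1 h with h | h
        · exact hyY h
        · exact hyA (mem_filter.1 h).1
      have hyx : y < x := by omega
      have hB' : cmp y x B ∈ F := hSh B hBF y x hyx hxB hyB
      refine ⟨cmp y x B, insert y Y, hB', ?_, ?_, ?_, ?_⟩
      · rw [card_insert_of_notMem hyY, hYc]
      · intro z hz
        rcases mem_insert.1 hz with rfl | hz
        · exact hyA
        · exact hYA z hz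
      · intro z hz
        rcases mem_insert.1 hz with rfl | hz
        · omega
        · have := hYlt z hz; omega
      · have hxY : x ∉ Y := fun h => hYA x h hxA
        have herase : (A.filter (fun z => rk A z < t - 1 ∨ t - 1 + i ≤ rk A z)).erase x
            = A.filter (fun z => rk A z < t - 1 ∨ t - 1 + (i+1) ≤ rk A z) := by
          ext z
          simp only [mem_erase, mem_filter]
          constructor
          · rintro ⟨hzx, hzA, hz2⟩
            refine ⟨hzA, ?_⟩
            rcases hz2 with h | h
            · exact Or.inl h
            · have hne : rk A z ≠ t - 1 + i :=
                fun he => hzx (rk_injOn hzA hxA (he.trans hxrk.symm))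
              right; omega
          · rintro ⟨hzA, hz2⟩
            refine ⟨?_, hzA, ?_⟩
            · intro he
              subst he
              rcases hz2 with h | h <;> omega
            · rcases hz2 with h | h
              · exact Or.inl h
              · right; omega
        rw [cmp, hBeq, erase_union_distrib, erase_eq_of_notMem hxY, insert_union, herase]
  obtain ⟨B, Y, hBF, hYc, hYA, hYlt, hBeq⟩ := main (A.card - (t-1)) le_rfl
  have hBA : B ∩ A = A.filter (fun x => rk A x < t - 1) := by
    rw [hBeq, union_inter_distrib_right]
    have h1 : Y ∩ A = ∅ := by
      rw [eq_empty_iff_forall_notMem]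
      intro z hz
      obtain ⟨hzY, hzA⟩ := mem_inter.1 hz
      exact hYA z hzY hzA
    have h2 : A.filter (fun x => rk A x < t - 1 ∨ t - 1 + (A.card - (t-1)) ≤ rk A x) ∩ A
        = A.filter (fun x => rk A x < t - 1 ∨ t - 1 + (A.card - (t-1)) ≤ rk A x) :=
      inter_eq_left.2 (filter_subset _ _)
    rw [h1, empty_union, h2]
    apply filter_congr
    intro x hx
    have := rk_lt_card hx
    constructor
    · rintro (h | h)
      · exact h
      · omega
    · exact Or.inl
  have hfin : (B ∩ A).card = t - 1 := by
    rw [hBA, card_filter_rk_lt A (t-1) (by omega)]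
  have := hInt B hBF A hA
  omega


/-! ### The biased measure -/

noncomputable def mu (n : ℕ) (p : ℝ) (G : Finset (Finset ℕ)) : ℝ :=
  ∑ A ∈ G, p ^ A.card * (1 - p) ^ (n - A.card)

lemma mu_nonneg {n : ℕ} {p : ℝ} (hp0 : 0 ≤ p) (hp1 : p ≤ 1) (G : Finset (Finset ℕ)) :
    0 ≤ mu n p G :=
  Finset.sum_nonneg fun A _ =>
    mul_nonneg (pow_nonneg hp0 _) (pow_nonneg (by linarith) _)

lemma mu_mono {n : ℕ} {p : ℝ} (hp0 : 0 ≤ p) (hp1 : p ≤ 1) {G H : Finset (Finset ℕ)}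
    (h : G ⊆ H) : mu n p G ≤ mu n p H :=
  sum_le_sum_of_subset_of_nonneg h fun A _ _ =>
    mul_nonneg (pow_nonneg hp0 _) (pow_nonneg (by linarith) _)

lemma mu_union_le {n : ℕ} {p : ℝ} (hp0 : 0 ≤ p) (hp1 : p ≤ 1) (G H : Finset (Finset ℕ)) :
    mu n p (G ∪ H) ≤ mu n p G + mu n p H := by
  have h := sum_union_inter (s₁ := G) (s₂ := H)
    (f := fun A => p ^ A.card * (1 - p) ^ (n - A.card))
  have h2 : 0 ≤ mu n p (G ∩ H) := mu_nonneg hp0 hp1 _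
  unfold mu at *
  linarith

lemma mu_biUnion_le {n : ℕ} {p : ℝ} (hp0 : 0 ≤ p) (hp1 : p ≤ 1) {ι : Type}
    [DecidableEq ι] (s : Finset ι) (f : ι → Finset (Finset ℕ)) :
    mu n p (s.biUnion f) ≤ ∑ i ∈ s, mu n p (f i) := by
  induction s using Finset.induction_on with
  | empty => simp [mu]
  | insert a s ha ih =>
    rw [biUnion_insert, sum_insert ha]
    calc mu n p (f a ∪ s.biUnion f) ≤ mu n p (f a) + mu n p (s.biUnion f) :=
          mu_union_le hp0 hp1 _ _
      _ ≤ _ := by linarith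

lemma sum_pow_card {α : Type*} [DecidableEq α] (s : Finset α) (p q : ℝ) :
    ∑ B ∈ s.powerset, p ^ B.card * q ^ (s.card - B.card) = (p + q) ^ s.card := by
  induction s using Finset.induction_on with
  | empty => simp
  | insert a s ha ih =>
    rw [sum_powerset_insert ha, card_insert_of_notMem ha]
    have h1 : ∀ B ∈ s.powerset,
        p ^ B.card * q ^ (s.card + 1 - B.card) = (p ^ B.card * q ^ (s.card - B.card)) * q := by
      intro B hB
      have hle : B.card ≤ s.card := card_le_card (mem_powerset.1 hB)
      rw [show s.card + 1 - B.card = (s.card - B.card) + 1 by omega, pow_succ]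
      ring
    have h2 : ∀ B ∈ s.powerset,
        p ^ (insert a B).card * q ^ (s.card + 1 - (insert a B).card)
          = (p ^ B.card * q ^ (s.card - B.card)) * p := by
      intro B hB
      have hle : B.card ≤ s.card := card_le_card (mem_powerset.1 hB)
      have haB : a ∉ B := fun h => ha (mem_powerset.1 hB h)
      rw [card_insert_of_notMem haB,
        show s.card + 1 - (B.card + 1) = s.card - B.card by omega, pow_succ]
      ring
    rw [sum_congr rfl h1, sum_congr rfl h2, ← sum_mul, ← sum_mul, ih, pow_succ]
    ring

lemma mu_superset {n : ℕ} {p : ℝ} (T : Finset ℕ) (hT : T ⊆ range n) :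
    mu n p ((range n).powerset.filter (fun W => T ⊆ W)) = p ^ T.card := by
  classical
  have himg : (range n).powerset.filter (fun W => T ⊆ W)
      = ((range n \ T).powerset).image (fun B => B ∪ T) := by
    ext W
    simp only [mem_filter, mem_powerset, mem_image]
    constructor
    · rintro ⟨hWn, hTW⟩
      refine ⟨W \ T, ?_, ?_⟩
      · intro z hz
        obtain ⟨hzW, hzT⟩ := mem_sdiff.1 hz
        exact mem_sdiff.2 ⟨hWn hzW, hzT⟩
      · rw [sdiff_union_of_subset hTW]
    · rintro ⟨B, hB, rfl⟩
      constructor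
      · intro z hz
        rcases mem_union.1 hz with hz | hz
        · exact (mem_sdiff.1 (hB hz)).1
        · exact hT hz
      · exact subset_union_right
  have hinj : ∀ B₁ ∈ (range n \ T).powerset, ∀ B₂ ∈ (range n \ T).powerset,
      B₁ ∪ T = B₂ ∪ T → B₁ = B₂ := by
    intro B₁ h₁ B₂ h₂ h
    have hd : ∀ B ∈ (range n \ T).powerset, (B ∪ T) \ T = B := by
      intro B hB
      rw [union_sdiff_right]
      apply sdiff_eq_self_of_disjoint
      rw [disjoint_left]
      intro z hz
      exact (mem_sdiff.1 (mem_powerset.1 hB hz)).2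
    rw [← hd B₁ h₁, ← hd B₂ h₂, h]
  have hdisj : ∀ B ∈ (range n \ T).powerset, Disjoint B T := by
    intro B hB
    rw [disjoint_left]
    intro z hz
    exact (mem_sdiff.1 (mem_powerset.1 hB hz)).2
  have hcardsd : (range n \ T).card = n - T.card := by
    rw [card_sdiff_of_subset hT, card_range]
  rw [mu, himg, sum_image hinj]
  have hterm : ∀ B ∈ (range n \ T).powerset,
      p ^ (B ∪ T).card * (1 - p) ^ (n - (B ∪ T).card)
        = p ^ T.card * (p ^ B.card * (1 - p) ^ ((range n \ T).card - B.card)) := by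
    intro B hB
    have hc : (B ∪ T).card = B.card + T.card := card_union_of_disjoint (hdisj B hB)
    have hble : B.card ≤ n - T.card := by
      have := card_le_card (mem_powerset.1 hB)
      omega
    have hTle : T.card ≤ n := by
      have := card_le_card hT
      rwa [card_range] at this
    rw [hc, hcardsd, show n - (B.card + T.card) = (n - T.card) - B.card by omega, pow_add]
    ring
  rw [sum_congr rfl hterm, ← mul_sum, sum_pow_card]
  norm_num

/-! ### The key measure bound for intersecting families -/

lemma key_bound (t n : ℕ) (ht : 1 ≤ t) (p : ℝ) (hp0 : 0 ≤ p) (hp1 : p ≤ 1)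
    (F : Finset (Finset ℕ)) (hsub : ∀ A ∈ F, A ⊆ range n) (hint : Inters t F) :
    mu n p F ≤ ∑ i ∈ range (n+1), (((t+2*i).choose (t+i) : ℕ) : ℝ) * p ^ (t+i) := by
  classical
  obtain ⟨G, hSh, hint', hsub', hw⟩ := exists_shifted t n (Pot F) F le_rfl hsub hint
  have hmuFG : mu n p F = mu n p G :=
    (hw (fun k => p ^ k * (1 - p) ^ (n - k))).symm
  rw [hmuFG]
  have hGsub : G ⊆ (range (n+1)).biUnion (fun i => (range n).powerset.filter
      (fun W => t + i ≤ (W ∩ range (t + 2*i)).card)) := by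
    intro A hAG
    obtain ⟨i, hi⟩ := walk_lemma hSh hint' ht hAG
    have hAn : A ⊆ range n := hsub' A hAG
    have hicard : t + i ≤ A.card := le_trans hi (card_le_card inter_subset_left)
    have hAcard : A.card ≤ n := by
      have := card_le_card hAn
      rwa [card_range] at this
    exact mem_biUnion.2 ⟨i, mem_range.2 (by omega),
      mem_filter.2 ⟨mem_powerset.2 hAn, hi⟩⟩
  have hEv : ∀ i : ℕ, mu n p ((range n).powerset.filter
      (fun W => t + i ≤ (W ∩ range (t + 2*i)).card))
        ≤ (((t+2*i).choose (t+i) : ℕ) : ℝ) * p ^ (t+i) := by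
    intro i
    have hsub2 : (range n).powerset.filter (fun W => t + i ≤ (W ∩ range (t + 2*i)).card)
        ⊆ (powersetCard (t+i) (range (t+2*i))).biUnion
            (fun T => (range n).powerset.filter (fun W => T ⊆ W)) := by
      intro W hW
      obtain ⟨hWn, hWc⟩ := mem_filter.1 hW
      obtain ⟨T, hT1, hT2⟩ := exists_subset_card_eq hWc
      refine mem_biUnion.2 ⟨T, mem_powersetCard.2
        ⟨le_trans hT1 inter_subset_right, hT2⟩, mem_filter.2 ⟨hWn, le_trans hT1 inter_subset_left⟩⟩
    calc mu n p _ ≤ mu n p ((powersetCard (t+i) (range (t+2*i))).biUnion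
          (fun T => (range n).powerset.filter (fun W => T ⊆ W))) := mu_mono hp0 hp1 hsub2
      _ ≤ ∑ T ∈ powersetCard (t+i) (range (t+2*i)),
            mu n p ((range n).powerset.filter (fun W => T ⊆ W)) := mu_biUnion_le hp0 hp1 _ _
      _ ≤ ∑ T ∈ powersetCard (t+i) (range (t+2*i)), p ^ (t+i) := by
          apply sum_le_sum
          intro T hT
          obtain ⟨hTsub, hTcard⟩ := mem_powersetCard.1 hT
          by_cases hTn : T ⊆ range n
          · rw [mu_superset T hTn, hTcard]
          · have hempty : (range n).powerset.filter (fun W => T ⊆ W) = ∅ := by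
              rw [filter_eq_empty_iff]
              intro W hW hTW
              exact hTn (le_trans hTW (mem_powerset.1 hW))
            rw [hempty]
            have : (0:ℝ) ≤ p ^ (t+i) := pow_nonneg hp0 _
            simpa [mu] using this
      _ = (((t+2*i).choose (t+i) : ℕ) : ℝ) * p ^ (t+i) := by
          rw [sum_const, card_powersetCard, card_range, nsmul_eq_mul]
  calc mu n p G ≤ mu n p ((range (n+1)).biUnion (fun i => (range n).powerset.filter
        (fun W => t + i ≤ (W ∩ range (t + 2*i)).card))) := mu_mono hp0 hp1 hGsub
    _ ≤ ∑ i ∈ range (n+1), mu n p ((range n).powerset.filter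
        (fun W => t + i ≤ (W ∩ range (t + 2*i)).card)) := mu_biUnion_le hp0 hp1 _ _
    _ ≤ _ := sum_le_sum fun i _ => hEv i


/-! ### Binomial coefficient estimates -/

lemma choose_id (c i : ℕ) :
    ((i+1) * (c+i+1)) * ((c+2*i+2).choose (i+1))
      = ((c+2*i+1) * (c+2*i+2)) * ((c+2*i).choose i) := by
  have h1 : (c+2*i+2).choose (i+1) * (i+1).factorial * (c+i+1).factorial = (c+2*i+2).factorial := by
    have h := Nat.choose_mul_factorial_mul_factorial (show i+1 ≤ c+2*i+2 by omega)
    rwa [show c+2*i+2 - (i+1) = c+i+1 by omega] at h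
  have h2 : (c+2*i).choose i * i.factorial * (c+i).factorial = (c+2*i).factorial := by
    have h := Nat.choose_mul_factorial_mul_factorial (show i ≤ c+2*i by omega)
    rwa [show c+2*i - i = c+i by omega] at h
  apply Nat.eq_of_mul_eq_mul_right
    (show 0 < i.factorial * (c+i).factorial from Nat.mul_pos (Nat.factorial_pos _) (Nat.factorial_pos _))
  have e1 : (i+1).factorial = (i+1) * i.factorial := Nat.factorial_succ i
  have e2 : (c+i+1).factorial = (c+i+1) * (c+i).factorial := Nat.factorial_succ (c+i)
  have e3 : (c+2*i+2).factorial = (c+2*i+2) * ((c+2*i+1) * (c+2*i).factorial) := by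
    rw [show c+2*i+2 = (c+2*i+1)+1 by omega, Nat.factorial_succ, Nat.factorial_succ]
  calc ((i+1) * (c+i+1)) * ((c+2*i+2).choose (i+1)) * (i.factorial * (c+i).factorial)
      = (c+2*i+2).choose (i+1) * ((i+1) * i.factorial) * ((c+i+1) * (c+i).factorial) := by ring
    _ = (c+2*i+2).choose (i+1) * (i+1).factorial * (c+i+1).factorial := by rw [e1, e2]
    _ = (c+2*i+2).factorial := h1
    _ = (c+2*i+2) * ((c+2*i+1) * (c+2*i).factorial) := e3
    _ = (c+2*i+2) * ((c+2*i+1) * ((c+2*i).choose i * i.factorial * (c+i).factorial)) := by rw [h2]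
    _ = ((c+2*i+1) * (c+2*i+2)) * ((c+2*i).choose i) * (i.factorial * (c+i).factorial) := by ring

lemma choose_le_pow_aux {c : ℕ} (hc : 2 ≤ c) (i : ℕ) :
    (c+2*i+1) * (c+2*i+2) ≤ (c+2) * ((i+1) * (c+i+1)) := by
  obtain ⟨d, rfl⟩ := Nat.exists_eq_add_of_le hc
  apply Nat.le.intro (k := d^2*i + d*i^2 + 4*d*i + 2*i)
  ring

lemma choose_le_pow {c : ℕ} (hc : 2 ≤ c) : ∀ i, (c+2*i).choose i ≤ (c+2)^i := by
  intro i
  induction i with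
  | zero => simp
  | succ i ih =>
    have e : c + 2*(i+1) = c + 2*i + 2 := by ring
    rw [e]
    have h3 : ((i+1)*(c+i+1)) * ((c+2*i+2).choose (i+1))
        ≤ ((i+1)*(c+i+1)) * ((c+2)^(i+1)) := by
      calc ((i+1)*(c+i+1)) * ((c+2*i+2).choose (i+1))
          = ((c+2*i+1) * (c+2*i+2)) * ((c+2*i).choose i) := choose_id c i
        _ ≤ ((c+2) * ((i+1) * (c+i+1))) * ((c+2*i).choose i) :=
            Nat.mul_le_mul_right _ (choose_le_pow_aux hc i)
        _ ≤ ((c+2) * ((i+1) * (c+i+1))) * (c+2)^i :=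
            Nat.mul_le_mul_left _ ih
        _ = ((i+1)*(c+i+1)) * ((c+2)^(i+1)) := by ring
    have hpos : 0 < (i+1)*(c+i+1) := by positivity
    exact Nat.le_of_mul_le_mul_left h3 hpos

lemma tail_bound {t m : ℕ} (ht : 2 ≤ t) {p : ℝ} (hp0 : 0 ≤ p)
    (hr1 : ((t:ℝ)+2) * p < 1) :
    ∑ i ∈ range m, (((t+2*i).choose (t+i) : ℕ) : ℝ) * p ^ (t+i)
      ≤ p ^ t / (1 - ((t:ℝ)+2) * p) := by
  set r : ℝ := ((t:ℝ)+2) * p with hrdef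
  have hr0 : 0 ≤ r := by positivity
  have h1 : ∀ i : ℕ, (((t+2*i).choose (t+i) : ℕ) : ℝ) * p ^ (t+i) ≤ p ^ t * r ^ i := by
    intro i
    have hsymm : (t+2*i).choose (t+i) = (t+2*i).choose i := by
      have h := Nat.choose_symm (show t+i ≤ t+2*i by omega)
      rw [show t+2*i - (t+i) = i by omega] at h
      exact h.symm
    calc (((t+2*i).choose (t+i) : ℕ) : ℝ) * p ^ (t+i)
        = (((t+2*i).choose i : ℕ) : ℝ) * (p ^ t * p ^ i) := by rw [hsymm, pow_add]
      _ ≤ (((t+2)^i : ℕ) : ℝ) * (p ^ t * p ^ i) := by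
          apply mul_le_mul_of_nonneg_right _ (by positivity)
          exact_mod_cast choose_le_pow ht i
      _ = p ^ t * r ^ i := by
          rw [hrdef]
          push_cast
          rw [mul_pow]
          ring
  have hgeom : ∑ i ∈ range m, r ^ i ≤ 1 / (1 - r) := by
    rw [le_div_iff₀ (by linarith)]
    have hgm := geom_sum_mul r m
    have hrm : 0 ≤ r ^ m := pow_nonneg hr0 m
    nlinarith [hgm]
  calc ∑ i ∈ range m, (((t+2*i).choose (t+i) : ℕ) : ℝ) * p ^ (t+i)
      ≤ ∑ i ∈ range m, p ^ t * r ^ i := sum_le_sum fun i _ => h1 i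
    _ = p ^ t * ∑ i ∈ range m, r ^ i := by rw [mul_sum]
    _ ≤ p ^ t * (1 / (1 - r)) := by
        apply mul_le_mul_of_nonneg_left hgeom (by positivity)
    _ = p ^ t / (1 - r) := by ring

/-! ### Stirling estimate -/

lemma stirling_lower (q : ℕ) (hq : 1 ≤ q) :
    Real.sqrt Real.pi * (Real.sqrt (2*(q:ℝ)) * ((q : ℝ) / Real.exp 1) ^ q)
      ≤ (q.factorial : ℝ) := by
  have h1 : Real.sqrt Real.pi ≤ Stirling.stirlingSeq q := by
    obtain ⟨m, rfl⟩ := Nat.exists_eq_add_of_le hq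
    have hcomp : Filter.Tendsto (Stirling.stirlingSeq ∘ Nat.succ)
        Filter.atTop (nhds (Real.sqrt Real.pi)) :=
      Stirling.tendsto_stirlingSeq_sqrt_pi.comp (Filter.tendsto_add_atTop_nat 1)
    have h := Stirling.stirlingSeq'_antitone.le_of_tendsto hcomp m
    simpa [Function.comp, Nat.succ_eq_add_one, Nat.add_comm] using h
  have hq0 : (0:ℝ) < (q:ℝ) := by exact_mod_cast hq
  have hden : 0 < Real.sqrt (2*(q:ℝ)) * ((q:ℝ) / Real.exp 1) ^ q := by
    have h3 : 0 < Real.sqrt (2*(q:ℝ)) := Real.sqrt_pos.2 (by positivity)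
    have h4 : 0 < (q:ℝ) / Real.exp 1 := by positivity
    exact mul_pos h3 (pow_pos h4 _)
  rw [Stirling.stirlingSeq, le_div_iff₀ hden] at h1
  linarith [h1]

/-! ### Numeric estimates -/

lemma sqrt_two_pi_ge : (2.506 : ℝ) ≤ Real.sqrt (2*Real.pi) := by
  have hpi : (3.141592 : ℝ) < Real.pi := Real.pi_gt_d6
  rw [show (2.506:ℝ) = Real.sqrt (2.506^2) from (Real.sqrt_sq (by norm_num)).symm]
  apply Real.sqrt_le_sqrt
  nlinarith

lemma exp_one_ge : (2.718 : ℝ) ≤ Real.exp 1 := by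
  have := Real.exp_one_gt_d9
  linarith

lemma e_sqrt_two_pi_ge : (20/3 : ℝ) ≤ Real.exp 1 * Real.sqrt (2*Real.pi) := by
  have h1 := sqrt_two_pi_ge
  have h2 := exp_one_ge
  nlinarith

lemma exp_nat_ge {c : ℕ} (hc : 2 ≤ c) : (7.38 : ℝ) ≤ Real.exp c := by
  have h1 : Real.exp 2 ≤ Real.exp c := Real.exp_le_exp.2 (by exact_mod_cast hc)
  have h2 : Real.exp (2:ℝ) = Real.exp 1 * Real.exp 1 := by
    rw [← Real.exp_add]; norm_num
  have := exp_one_ge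
  nlinarith

lemma sqrt_nat_ge {c : ℕ} (hc : 2 ≤ c) : (1.414 : ℝ) ≤ Real.sqrt c := by
  rw [show (1.414:ℝ) = Real.sqrt (1.414^2) from (Real.sqrt_sq (by norm_num)).symm]
  apply Real.sqrt_le_sqrt
  have : (2:ℝ) ≤ (c:ℝ) := by exact_mod_cast hc
  nlinarith

lemma poly_exp_bound (c : ℕ) (hc : 2 ≤ c) : ((c:ℝ))^2 + c ≤ (6/5) * Real.exp c := by
  induction c, hc using Nat.le_induction with
  | base =>
    have := exp_nat_ge (le_refl 2)
    norm_num
    nlinarith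
  | succ c hc ih =>
    have ihh := ih
    have h1 : Real.exp ((c:ℝ)+1) = Real.exp c * Real.exp 1 := (Real.exp_add _ _)
    have h2 : (2:ℝ) ≤ Real.exp 1 := by linarith [exp_one_ge]
    have hcr : (2:ℝ) ≤ (c:ℝ) := by exact_mod_cast hc
    have hexp_pos : (0:ℝ) < Real.exp c := Real.exp_pos _
    have hstep : ((c:ℝ)+1)^2 + ((c:ℝ)+1) ≤ 2*((c:ℝ)^2 + (c:ℝ)) := by nlinarith
    have hmul : 2 * ((6:ℝ)/5 * Real.exp c) ≤ (6/5 * Real.exp c) * Real.exp 1 := by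
      nlinarith
    push_cast
    rw [h1]
    linarith

lemma poly_bound {c : ℕ} (hc : 2 ≤ c) :
    ((c:ℝ))^2 + c ≤ (17/20) * (Real.sqrt c * Real.exp c) := by
  have h1 := poly_exp_bound c hc
  have h2 := sqrt_nat_ge hc
  have h3 : 0 < Real.exp c := Real.exp_pos _
  nlinarith

lemma x_ge_ten {c : ℕ} (hc : 2 ≤ c) : (10:ℝ) ≤ Real.sqrt c * Real.exp c := by
  have h1 := sqrt_nat_ge hc
  have h2 := exp_nat_ge hc
  nlinarith

lemma ratio_bound {q : ℕ} (hq : 1 ≤ q) :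
    ((q:ℝ))^(q+1) / (q.factorial : ℝ)
      ≤ Real.sqrt q * Real.exp q / Real.sqrt (2*Real.pi) := by
  have hq0 : (0:ℝ) < (q:ℝ) := by exact_mod_cast hq
  have hfac : (0:ℝ) < (q.factorial : ℝ) := by exact_mod_cast q.factorial_pos
  have hsq : 0 < Real.sqrt (q:ℝ) := Real.sqrt_pos.2 hq0
  have hs2 : 0 < Real.sqrt 2 := Real.sqrt_pos.2 (by norm_num)
  have hspi : 0 < Real.sqrt Real.pi := Real.sqrt_pos.2 Real.pi_pos
  have hexp : 0 < Real.exp q := Real.exp_pos _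
  have hD : 0 < Real.sqrt Real.pi * (Real.sqrt (2*(q:ℝ)) * ((q:ℝ)/Real.exp 1)^q) := by
    have h3 : 0 < Real.sqrt (2*(q:ℝ)) := Real.sqrt_pos.2 (by positivity)
    have h4 : 0 < ((q:ℝ)/Real.exp 1) := by positivity
    exact mul_pos hspi (mul_pos h3 (pow_pos h4 _))
  have step1 : ((q:ℝ))^(q+1) / (q.factorial : ℝ)
      ≤ ((q:ℝ))^(q+1) / (Real.sqrt Real.pi * (Real.sqrt (2*(q:ℝ)) * ((q:ℝ)/Real.exp 1)^q)) :=
    div_le_div_of_nonneg_left (by positivity) hD (stirling_lower q hq)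
  refine le_trans step1 (le_of_eq ?_)
  have e1 : ((q:ℝ)/Real.exp 1)^q = (q:ℝ)^q / Real.exp q := by
    rw [div_pow, Real.exp_one_pow]
  have e2 : Real.sqrt (2*(q:ℝ)) = Real.sqrt 2 * Real.sqrt q := Real.sqrt_mul (by norm_num) _
  have e3 : Real.sqrt (2*Real.pi) = Real.sqrt 2 * Real.sqrt Real.pi :=
    Real.sqrt_mul (by norm_num) _
  have e5 : Real.sqrt (q:ℝ) * Real.sqrt (q:ℝ) = (q:ℝ) := Real.mul_self_sqrt (le_of_lt hq0)
  have hqq : (0:ℝ) < (q:ℝ)^q := pow_pos hq0 _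
  rw [e1, e2, e3, pow_succ]
  field_simp
  linear_combination (-1 : ℝ) * e5

lemma main_arith {q : ℕ} (hq : 1 ≤ q) :
    ((q:ℝ))^(q+1) / (q.factorial : ℝ) + ((q:ℝ)+3) * q + 2
      ≤ Real.sqrt (q+1:ℕ) * Real.exp (q+1:ℕ) := by
  have hc : 2 ≤ q + 1 := by omega
  have h1 := ratio_bound hq
  have h2 : Real.sqrt (q:ℝ) ≤ Real.sqrt ((q+1:ℕ):ℝ) := by
    apply Real.sqrt_le_sqrt
    push_cast
    linarith
  have h3 : Real.exp ((q+1:ℕ):ℝ) = Real.exp q * Real.exp 1 := by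
    push_cast
    rw [← Real.exp_add]
  have h4 := e_sqrt_two_pi_ge
  have h5 : ((q+1:ℕ):ℝ)^2 + ((q+1:ℕ):ℝ) ≤ (17/20) * (Real.sqrt (q+1:ℕ) * Real.exp (q+1:ℕ)) :=
    poly_bound hc
  have hspi : 0 < Real.sqrt (2*Real.pi) := Real.sqrt_pos.2 (by positivity)
  have hsq1 : 0 < Real.sqrt ((q+1:ℕ):ℝ) := Real.sqrt_pos.2 (by positivity)
  have hexpq : 0 < Real.exp (q:ℝ) := Real.exp_pos _
  have hexp1 : 0 < Real.exp 1 := Real.exp_pos _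
  have hsqq : 0 ≤ Real.sqrt (q:ℝ) := Real.sqrt_nonneg _
  -- √q exp q / √(2π) ≤ (3/20) √(q+1) exp(q+1)
  have key : Real.sqrt q * Real.exp q / Real.sqrt (2*Real.pi)
      ≤ (3/20) * (Real.sqrt (q+1:ℕ) * Real.exp (q+1:ℕ)) := by
    rw [div_le_iff₀ hspi, h3]
    have h6 : Real.sqrt (q:ℝ) * Real.exp q ≤ Real.sqrt ((q+1:ℕ):ℝ) * Real.exp q :=
      mul_le_mul_of_nonneg_right h2 (le_of_lt hexpq)
    have h7 : (20/3:ℝ) ≤ Real.exp 1 * Real.sqrt (2*Real.pi) := h4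
    nlinarith [mul_pos hsq1 hexpq]
  have hcast : ((q:ℝ)+3) * q + 2 = ((q+1:ℕ):ℝ)^2 + ((q+1:ℕ):ℝ) := by
    push_cast
    ring
  linarith

/-! ### Counting colorings with a prescribed fiber -/

lemma fiber_count {V : Type u} [Fintype V] [DecidableEq V] {L : ℕ}
    (S : Finset (Fin L)) (W : Finset V) :
    ((univ : Finset (V → Fin L)).filter
        (fun f => univ.filter (fun v => f v ∈ S) = W)).card
      = S.card ^ W.card * (L - S.card) ^ (Fintype.card V - W.card) := by
  classical
  have hpred : ∀ f : V → Fin L,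
      (univ.filter (fun v => f v ∈ S) = W) ↔ (∀ v, f v ∈ S ↔ v ∈ W) := by
    intro f
    rw [Finset.ext_iff]
    apply forall_congr'
    intro v
    simp
  rw [filter_congr (fun f _ => hpred f)]
  have hcard : ((univ : Finset (V → Fin L)).filter (fun f => ∀ v, f v ∈ S ↔ v ∈ W)).card
      = Fintype.card {f : V → Fin L // ∀ v, f v ∈ S ↔ v ∈ W} :=
    (Fintype.card_subtype _).symm
  rw [hcard]
  have hequiv : {f : V → Fin L // ∀ v, f v ∈ S ↔ v ∈ W}
      ≃ ∀ v : V, {y : Fin L // y ∈ S ↔ v ∈ W} :=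
    Equiv.subtypePiEquivPi (p := fun v y => y ∈ S ↔ v ∈ W)
  rw [Fintype.card_congr hequiv, Fintype.card_pi]
  have hterm : ∀ v : V, Fintype.card {y : Fin L // y ∈ S ↔ v ∈ W}
      = if v ∈ W then S.card else L - S.card := by
    intro v
    by_cases hv : v ∈ W
    · rw [if_pos hv, Fintype.card_subtype]
      have h : (univ : Finset (Fin L)).filter (fun y => y ∈ S ↔ v ∈ W) = S := by
        ext y
        simp [hv]
      rw [h]
    · rw [if_neg hv, Fintype.card_subtype]
      have h : (univ : Finset (Fin L)).filter (fun y => y ∈ S ↔ v ∈ W) = univ \ S := by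
        ext y
        simp [hv]
      rw [h, card_sdiff_of_subset (subset_univ S), card_univ, Fintype.card_fin]
  rw [Finset.prod_congr rfl (fun v _ => hterm v)]
  have h1 : ((univ : Finset V).filter (fun v => v ∈ W)) = W := by
    ext v; simp
  have h2 : ((univ : Finset V).filter (fun v => ¬ v ∈ W)).card = Fintype.card V - W.card := by
    rw [filter_not, h1, card_sdiff_of_subset (subset_univ W), card_univ]
  calc ∏ v ∈ (univ : Finset V), (if v ∈ W then S.card else L - S.card)
      = (∏ v ∈ univ.filter (fun v => v ∈ W), (if v ∈ W then S.card else L - S.card))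
        * ∏ v ∈ univ.filter (fun v => ¬ v ∈ W), (if v ∈ W then S.card else L - S.card) :=
        (prod_filter_mul_prod_filter_not univ _ _).symm
    _ = (∏ _v ∈ univ.filter (fun v => v ∈ W), S.card)
        * ∏ _v ∈ univ.filter (fun v => ¬ v ∈ W), (L - S.card) := by
        congr 1
        · exact prod_congr rfl (fun v hv => if_pos (mem_filter.1 hv).2)
        · exact prod_congr rfl (fun v hv => if_neg (mem_filter.1 hv).2)
    _ = S.card ^ W.card * (L - S.card) ^ (Fintype.card V - W.card) := by
        rw [prod_const, prod_const, h1, h2]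



/-! ### The bad colorings for a fixed colour set -/

lemma badS_bound {V : Type u} [Fintype V] [DecidableEq V] {L q : ℕ} (hq : 1 ≤ q)
    (hL : (q+3)*q < L)
    (E' : Finset (Finset V)) (hE' : ∀ e₁ ∈ E', ∀ e₂ ∈ E', q+1 ≤ (e₁ ∩ e₂).card)
    (S : Finset (Fin L)) (hS : S.card = q) :
    (((univ : Finset (V → Fin L)).filter
        (fun f => ∃ e ∈ E', ∀ v ∈ e, f v ∈ S)).card : ℝ)
      ≤ (L:ℝ)^(Fintype.card V)
          * (((q:ℝ)/L)^(q+1) / (1 - ((q:ℝ)+3) * ((q:ℝ)/L))) := by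
  classical
  set n := Fintype.card V with hn
  set p : ℝ := (q:ℝ)/L with hp
  have hL0 : 0 < L := by nlinarith
  have hLr : (0:ℝ) < (L:ℝ) := by exact_mod_cast hL0
  have hqL : q ≤ L := by nlinarith
  have hp0 : 0 ≤ p := by positivity
  have hp1 : p ≤ 1 := by
    rw [hp, div_le_one hLr]
    exact_mod_cast hqL
  have hrp : ((q:ℝ)+3) * p < 1 := by
    rw [hp, ← mul_div_assoc, div_lt_one hLr]
    have : (((q+3)*q : ℕ) : ℝ) < (L:ℝ) := by exact_mod_cast hL
    push_cast at this
    linarith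
  set U : Finset (Finset V) := univ.powerset.filter (fun W => ∃ e ∈ E', e ⊆ W) with hU
  -- fiberwise counting
  have hmap : ∀ f ∈ (univ : Finset (V → Fin L)).filter (fun f => ∃ e ∈ E', ∀ v ∈ e, f v ∈ S),
      (univ.filter (fun v => f v ∈ S)) ∈ U := by
    intro f hf
    obtain ⟨e, heE, hev⟩ := (mem_filter.1 hf).2
    exact mem_filter.2 ⟨mem_powerset.2 (subset_univ _), e, heE,
      fun v hv => mem_filter.2 ⟨mem_univ v, hev v hv⟩⟩
  have hfib := card_eq_sum_card_fiberwise hmap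
  have hle1 : (((univ : Finset (V → Fin L)).filter
      (fun f => ∃ e ∈ E', ∀ v ∈ e, f v ∈ S)).card : ℕ)
      ≤ ∑ W ∈ U, q ^ W.card * (L - q) ^ (n - W.card) := by
    rw [hfib]
    apply sum_le_sum
    intro W hW
    calc (((univ.filter (fun f : V → Fin L => ∃ e ∈ E', ∀ v ∈ e, f v ∈ S)).filter
          (fun f => univ.filter (fun v => f v ∈ S) = W)).card)
        ≤ ((univ : Finset (V → Fin L)).filter
            (fun f => univ.filter (fun v => f v ∈ S) = W)).card := by
          apply card_le_card
          intro f hf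
          exact mem_filter.2 ⟨mem_univ f, (mem_filter.1 hf).2⟩
      _ = q ^ W.card * (L - q) ^ (n - W.card) := by
          rw [fiber_count S W, hS]
  -- pass to the real measure
  have hWn : ∀ W ∈ U, W.card ≤ n := by
    intro W _
    rw [hn, ← card_univ]
    exact card_le_card (subset_univ W)
  have hle2 : ((∑ W ∈ U, q ^ W.card * (L - q) ^ (n - W.card) : ℕ) : ℝ)
      = (L:ℝ)^n * ∑ W ∈ U, p ^ W.card * (1-p) ^ (n - W.card) := by
    push_cast
    rw [mul_sum]
    apply sum_congr rfl
    intro W hW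
    have hqcast : (q:ℝ) = p * L := by
      rw [hp]; field_simp
    have hLqcast : ((L - q : ℕ) : ℝ) = (1 - p) * L := by
      rw [Nat.cast_sub hqL, hp]; field_simp
    rw [hqcast, hLqcast, mul_pow, mul_pow]
    have hsplit : (L:ℝ)^(W.card) * (L:ℝ)^(n - W.card) = (L:ℝ)^n := by
      rw [← pow_add]
      congr 1
      exact Nat.add_sub_cancel' (hWn W hW)
    calc p ^ W.card * (L:ℝ) ^ W.card * ((1-p) ^ (n - W.card) * (L:ℝ) ^ (n - W.card))
        = (p ^ W.card * (1-p) ^ (n - W.card)) * ((L:ℝ)^(W.card) * (L:ℝ)^(n - W.card)) := by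
          ring
      _ = (L:ℝ)^n * (p ^ W.card * (1-p) ^ (n - W.card)) := by rw [hsplit]; ring
  -- transfer to ℕ ground set and apply the key bound
  set emb : V → ℕ := fun v => ((Fintype.equivFin V) v : ℕ) with hemb
  have hembInj : Function.Injective emb := by
    intro a b h
    have : (Fintype.equivFin V) a = (Fintype.equivFin V) b := Fin.val_injective h
    exact (Fintype.equivFin V).injective this
  set Uhat : Finset (Finset ℕ) := U.image (fun W => W.image emb) with hUhat
  have hsum_eq : ∑ W ∈ U, p ^ W.card * (1-p) ^ (n - W.card) = mu n p Uhat := by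
    rw [hUhat, mu, sum_image (fun W₁ _ W₂ _ h => Finset.image_injective hembInj h)]
    apply sum_congr rfl
    intro W _
    rw [card_image_of_injective W hembInj]
  have hUsub : ∀ A ∈ Uhat, A ⊆ range n := by
    intro A hA
    obtain ⟨W, _, rfl⟩ := mem_image.1 hA
    intro z hz
    obtain ⟨v, _, rfl⟩ := mem_image.1 hz
    exact mem_range.2 ((Fintype.equivFin V v).isLt)
  have hUint : Inters (q+1) Uhat := by
    intro A hA B hB
    obtain ⟨W₁, hW₁, rfl⟩ := mem_image.1 hA
    obtain ⟨W₂, hW₂, rfl⟩ := mem_image.1 hB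
    obtain ⟨e₁, he₁, hsub₁⟩ := (mem_filter.1 hW₁).2
    obtain ⟨e₂, he₂, hsub₂⟩ := (mem_filter.1 hW₂).2
    rw [← Finset.image_inter _ _ hembInj, card_image_of_injective _ hembInj]
    calc q+1 ≤ (e₁ ∩ e₂).card := hE' e₁ he₁ e₂ he₂
      _ ≤ (W₁ ∩ W₂).card := card_le_card (inter_subset_inter hsub₁ hsub₂)
  have hkey := key_bound (q+1) n (Nat.le_add_left 1 q) p hp0 hp1 Uhat hUsub hUint
  have htail : ∑ i ∈ range (n+1), ((((q+1)+2*i).choose ((q+1)+i) : ℕ) : ℝ) * p ^ ((q+1)+i)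
      ≤ p ^ (q+1) / (1 - ((q:ℝ)+3) * p) := by
    have h := tail_bound (t := q+1) (m := n+1) (Nat.succ_le_succ hq) hp0
      (by push_cast; push_cast at hrp; linarith)
    have hcast : ((q+1 : ℕ):ℝ) + 2 = (q:ℝ) + 3 := by push_cast; ring
    rw [hcast] at h
    exact h
  -- put everything together
  calc (((univ : Finset (V → Fin L)).filter
        (fun f => ∃ e ∈ E', ∀ v ∈ e, f v ∈ S)).card : ℝ)
      ≤ ((∑ W ∈ U, q ^ W.card * (L - q) ^ (n - W.card) : ℕ) : ℝ) := by exact_mod_cast hle1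
    _ = (L:ℝ)^n * mu n p Uhat := by rw [hle2, hsum_eq]
    _ ≤ (L:ℝ)^n * (p ^ (q+1) / (1 - ((q:ℝ)+3) * p)) := by
        apply mul_le_mul_of_nonneg_left (le_trans hkey htail) (by positivity)

end SC

/-- For every c ≥ 2 there is a number of colors ℓ < √c · e^c such that every
c-intersecting hypergraph on a finite vertex set has a c-strong coloring with
ℓ colors (i.e. χ(c, c) < √c · e^c). -/
theorem stmt_18 (c : ℕ) (hc : 2 ≤ c) :
    ∃ ℓ : ℕ, (ℓ : ℝ) < Real.sqrt c * Real.exp c ∧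
      ∀ (V : Type u) [Fintype V] [DecidableEq V] (E : Set (Finset V)),
        (∀ e₁ ∈ E, ∀ e₂ ∈ E, c ≤ (e₁ ∩ e₂).card) →
        ∃ f : V → Fin ℓ, ∀ e ∈ E, min c e.card ≤ (e.image f).card := by
  classical
  open Finset in
  obtain ⟨q, rfl⟩ : ∃ q, c = q + 1 := ⟨c - 1, by omega⟩
  have hq : 1 ≤ q := by omega
  set x : ℝ := Real.sqrt (q+1:ℕ) * Real.exp (q+1:ℕ) with hx
  have hx10 : (10:ℝ) ≤ x := SC.x_ge_ten hc
  have hfl10 : 10 ≤ ⌊x⌋₊ := Nat.le_floor (by exact_mod_cast hx10)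
  set L : ℕ := ⌊x⌋₊ - 1 with hLdef
  have hLcast : (L:ℝ) = (⌊x⌋₊ : ℝ) - 1 := by
    rw [hLdef, Nat.cast_sub (by omega)]
    norm_num
  have hLlt : (L:ℝ) < x := by
    have h1 : (⌊x⌋₊ : ℝ) ≤ x := Nat.floor_le (by linarith)
    rw [hLcast]; linarith
  have hLgt : x - 2 < (L:ℝ) := by
    have h2 : x < (⌊x⌋₊ : ℝ) + 1 := Nat.lt_floor_add_one x
    rw [hLcast]; linarith
  have harith := SC.main_arith hq
  rw [← hx] at harith
  have hfacpos : (0:ℝ) < (q.factorial : ℝ) := by exact_mod_cast q.factorial_pos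
  have hratpos : (0:ℝ) < ((q:ℝ))^(q+1) / (q.factorial : ℝ) := by
    have : (0:ℝ) < (q:ℝ) := by exact_mod_cast hq
    positivity
  have hLqR : ((q:ℝ)+3) * q < (L:ℝ) := by
    linarith
  have hLq : (q+3)*q < L := by
    have : (((q+3)*q : ℕ) : ℝ) < (L:ℝ) := by push_cast; linarith
    exact_mod_cast this
  have hL0 : 0 < L := by nlinarith
  have hLr : (0:ℝ) < (L:ℝ) := by exact_mod_cast hL0
  set p : ℝ := (q:ℝ)/L with hp
  have hp0 : 0 ≤ p := by positivity
  have hD : 0 < 1 - ((q:ℝ)+3) * p := by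
    rw [hp, ← mul_div_assoc]
    rw [sub_pos, div_lt_one hLr]
    exact hLqR
  -- the final numeric inequality
  have hnum : ((L.choose q : ℕ) : ℝ) * (p ^ (q+1) / (1 - ((q:ℝ)+3) * p)) < 1 := by
    have hch : ((L.choose q : ℕ) : ℝ) ≤ (L:ℝ)^q / (q.factorial : ℝ) := by
      rw [le_div_iff₀ hfacpos]
      have h1 : L.choose q * q.factorial ≤ L ^ q := by
        have h2 : q.factorial * L.choose q = L.descFactorial q :=
          (Nat.descFactorial_eq_factorial_mul_choose L q).symm
        calc L.choose q * q.factorial = q.factorial * L.choose q := by ring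
          _ = L.descFactorial q := h2
          _ ≤ L ^ q := Nat.descFactorial_le_pow L q
      exact_mod_cast h1
    have hDL : (0:ℝ) < (L:ℝ) - ((q:ℝ)+3)*q := by linarith
    have hne1 : (1 - ((q:ℝ)+3) * ((q:ℝ)/(L:ℝ))) ≠ 0 := by
      have := hD; rw [hp] at this; linarith
    have hne2 : ((L:ℝ) - ((q:ℝ)+3)*q) ≠ 0 := ne_of_gt hDL
    have hLne : (L:ℝ) ≠ 0 := ne_of_gt hLr
    have heq : p ^ (q+1) / (1 - ((q:ℝ)+3) * p)
        = ((q:ℝ))^(q+1) / ((L:ℝ)^q * ((L:ℝ) - ((q:ℝ)+3)*q)) := by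
      rw [hp, div_pow]
      rw [div_eq_div_iff (by positivity) (by positivity)]
      field_simp
      ring
    have hkeynum : ((q:ℝ))^(q+1) < (q.factorial : ℝ) * ((L:ℝ) - ((q:ℝ)+3)*q) := by
      have h4 : ((q:ℝ))^(q+1) / (q.factorial : ℝ) < (L:ℝ) - ((q:ℝ)+3)*q := by
        linarith
      rw [div_lt_iff₀ hfacpos] at h4
      linarith [h4]
    have hLpow : (0:ℝ) < (L:ℝ)^q := by positivity
    rw [heq, ← mul_div_assoc, div_lt_one (by positivity)]
    calc ((L.choose q : ℕ) : ℝ) * ((q:ℝ))^(q+1)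
        ≤ ((L:ℝ)^q / (q.factorial : ℝ)) * ((q:ℝ))^(q+1) := by
          apply mul_le_mul_of_nonneg_right hch (by positivity)
      _ < ((L:ℝ)^q / (q.factorial : ℝ)) * ((q.factorial : ℝ) * ((L:ℝ) - ((q:ℝ)+3)*q)) := by
          apply mul_lt_mul_of_pos_left hkeynum (by positivity)
      _ = (L:ℝ)^q * ((L:ℝ) - ((q:ℝ)+3)*q) := by field_simp
  refine ⟨L, hLlt, ?_⟩
  intro V _ _ E hE
  set n := Fintype.card V with hn
  set E' : Finset (Finset V) := (Set.toFinite E).toFinset with hE'def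
  have hE'mem : ∀ e, e ∈ E' ↔ e ∈ E := fun e => Set.Finite.mem_toFinset _
  have hE'int : ∀ e₁ ∈ E', ∀ e₂ ∈ E', q+1 ≤ (e₁ ∩ e₂).card := by
    intro e₁ h₁ e₂ h₂
    exact hE e₁ ((hE'mem e₁).1 h₁) e₂ ((hE'mem e₂).1 h₂)
  set bad : Finset (V → Fin L) := univ.filter
    (fun f => ∃ S ∈ powersetCard q (univ : Finset (Fin L)), ∃ e ∈ E', ∀ v ∈ e, f v ∈ S)
    with hbad
  have hcardbound : (bad.card : ℝ) < ((univ : Finset (V → Fin L)).card : ℝ) := by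
    have hsub : bad ⊆ (powersetCard q (univ : Finset (Fin L))).biUnion
        (fun S => univ.filter (fun f => ∃ e ∈ E', ∀ v ∈ e, f v ∈ S)) := by
      intro f hf
      obtain ⟨S, hS, e, he, hev⟩ := (mem_filter.1 hf).2
      exact mem_biUnion.2 ⟨S, hS, mem_filter.2 ⟨mem_univ f, e, he, hev⟩⟩
    have h1 : bad.card ≤ ∑ S ∈ powersetCard q (univ : Finset (Fin L)),
        (univ.filter (fun f : V → Fin L => ∃ e ∈ E', ∀ v ∈ e, f v ∈ S)).card :=
      le_trans (card_le_card hsub) (card_biUnion_le)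
    have h2 : ∀ S ∈ powersetCard q (univ : Finset (Fin L)),
        ((univ.filter (fun f : V → Fin L => ∃ e ∈ E', ∀ v ∈ e, f v ∈ S)).card : ℝ)
          ≤ (L:ℝ)^n * (p ^ (q+1) / (1 - ((q:ℝ)+3) * p)) := by
      intro S hS
      have hScard : S.card = q := (mem_powersetCard.1 hS).2
      have := SC.badS_bound hq hLq E' hE'int S hScard
      rw [← hn] at this
      rw [hp]
      exact this
    have h3 : (bad.card : ℝ) ≤ ((L.choose q : ℕ) : ℝ)
        * ((L:ℝ)^n * (p ^ (q+1) / (1 - ((q:ℝ)+3) * p))) := by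
      calc (bad.card : ℝ) ≤ ((∑ S ∈ powersetCard q (univ : Finset (Fin L)),
            (univ.filter (fun f : V → Fin L => ∃ e ∈ E', ∀ v ∈ e, f v ∈ S)).card : ℕ) : ℝ) := by
            exact_mod_cast h1
        _ = ∑ S ∈ powersetCard q (univ : Finset (Fin L)),
            ((univ.filter (fun f : V → Fin L => ∃ e ∈ E', ∀ v ∈ e, f v ∈ S)).card : ℝ) := by
            push_cast; rfl
        _ ≤ ∑ _S ∈ powersetCard q (univ : Finset (Fin L)),
            (L:ℝ)^n * (p ^ (q+1) / (1 - ((q:ℝ)+3) * p)) := Finset.sum_le_sum h2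
        _ = ((L.choose q : ℕ) : ℝ) * ((L:ℝ)^n * (p ^ (q+1) / (1 - ((q:ℝ)+3) * p))) := by
            rw [sum_const, card_powersetCard, card_univ, Fintype.card_fin, nsmul_eq_mul]
    have huniv : ((univ : Finset (V → Fin L)).card : ℝ) = (L:ℝ)^n := by
      rw [card_univ, Fintype.card_fun, Fintype.card_fin, hn]
      push_cast
      rfl
    have hLn : (0:ℝ) < (L:ℝ)^n := by positivity
    calc (bad.card : ℝ) ≤ ((L.choose q : ℕ) : ℝ)
          * ((L:ℝ)^n * (p ^ (q+1) / (1 - ((q:ℝ)+3) * p))) := h3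
      _ = (L:ℝ)^n * (((L.choose q : ℕ) : ℝ) * (p ^ (q+1) / (1 - ((q:ℝ)+3) * p))) := by ring
      _ < (L:ℝ)^n * 1 := by
          apply mul_lt_mul_of_pos_left hnum hLn
      _ = ((univ : Finset (V → Fin L)).card : ℝ) := by rw [huniv]; ring
  have hbadlt : bad.card < (univ : Finset (V → Fin L)).card := by exact_mod_cast hcardbound
  have hgood : ∃ f : V → Fin L, f ∉ bad := by
    by_contra hcon
    push_neg at hcon
    have : (univ : Finset (V → Fin L)) ⊆ bad := fun f _ => hcon f
    have := card_le_card this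
    omega
  obtain ⟨f, hf⟩ := hgood
  refine ⟨f, ?_⟩
  intro e he
  have hce : q+1 ≤ e.card := by
    have := hE e he e he
    simpa using this
  rw [min_eq_left hce]
  by_contra hlt
  push_neg at hlt
  have himle : (e.image f).card ≤ q := by omega
  have hqle : q ≤ Fintype.card (Fin L) := by
    rw [Fintype.card_fin]
    nlinarith
  obtain ⟨S, hSsub, hScard⟩ := exists_superset_card_eq himle hqle
  apply hf
  rw [hbad]
  refine mem_filter.2 ⟨mem_univ f, S, mem_powersetCard.2 ⟨subset_univ S, hScard⟩,
    e, (hE'mem e).2 he, fun v hv => hSsub (mem_image_of_mem f hv)⟩
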